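/- Let g be a finite-dimensional semisimple real Lie algebra with pairing ⟨·,·⟩ = −B and dual bases {e_k}, {e^k}. Let T' : g × g → g be a skew-symmetric 2-cocycle for the adjoint representation, and set A(X) = Σ_k [e_k, T'(X, e^k)]. Then the modified derivative vanishes identically: for all X, Y in g, T'(X,Y) − [A(X), Y] − [X, A(Y)] + A([X,Y]) = 0. -/

import Mathlib

set_option linter.unusedSectionVars false

section Aux

variable {L : Type*} [LieRing L] [LieAlgebra ℝ L]
    {ι : Type*} [Fintype ι] [DecidableEq ι]

lemma aux_lie_sum (x : L) (g : ι → L) : ⁅x, ∑ k, g k⁆ = ∑ k, ⁅x, g k⁆ := by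
  simp only [← LieAlgebra.ad_apply (R := ℝ) (x := x), map_sum]

lemma aux_sum_lie (g : ι → L) (y : L) : ⁅∑ k, g k, y⁆ = ∑ k, ⁅g k, y⁆ :=
  calc ⁅∑ k, g k, y⁆ = -⁅y, ∑ k, g k⁆ := (lie_skew _ _).symm
    _ = -∑ k, ⁅y, g k⁆ := by rw [aux_lie_sum]
    _ = ∑ k, -⁅y, g k⁆ := by rw [Finset.sum_neg_distrib]
    _ = ∑ k, ⁅g k, y⁆ := Finset.sum_congr rfl fun k _ => lie_skew _ _

variable (e f : Module.Basis ι ℝ L)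
    (hdual : ∀ i j : ι, -(killingForm ℝ L (e i) (f j)) = if i = j then 1 else 0)

include hdual

lemma aux_B_ef (i j : ι) : killingForm ℝ L (e i) (f j) = if i = j then -1 else 0 := by
  have h := hdual i j
  split_ifs with hij <;> split_ifs at h <;> linarith

lemma aux_repr_e (X : L) (k : ι) : e.repr X k = -(killingForm ℝ L X (f k)) := by
  conv_rhs => rw [← e.sum_repr X]
  simp [aux_B_ef e f hdual, Finset.sum_ite_eq', mul_ite, -Module.Basis.sum_repr]

lemma aux_repr_f (X : L) (k : ι) : f.repr X k = -(killingForm ℝ L (e k) X) := by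
  conv_rhs => rw [← f.sum_repr X]
  simp [aux_B_ef e f hdual, Finset.sum_ite_eq, mul_ite, -Module.Basis.sum_repr]

lemma aux_trace (M : L →ₗ[ℝ] L) [Module.Finite ℝ L] [Module.Free ℝ L] :
    LinearMap.trace ℝ L M = ∑ k, f.repr (M (f k)) k := by
  rw [LinearMap.trace_eq_matrix_trace ℝ f M, Matrix.trace]
  simp [Matrix.diag, LinearMap.toMatrix_apply]

lemma aux_casimir [Module.Finite ℝ L] [Module.Free ℝ L] (W : L) :
    ∑ k, ⁅e k, ⁅f k, W⁆⁆ = -W := by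
  have key : ∀ V : L, killingForm ℝ L (∑ k, ⁅e k, ⁅f k, W⁆⁆) V = -(killingForm ℝ L W V) := by
    intro V
    have h1 : ∀ k, killingForm ℝ L (⁅e k, ⁅f k, W⁆⁆) V
        = killingForm ℝ L (e k) ⁅⁅f k, W⁆, V⁆ := fun k =>
      LieModule.traceForm_apply_lie_apply ℝ L L (e k) ⁅f k, W⁆ V
    have h2 : ∀ k, (⁅⁅f k, W⁆, V⁆ : L)
        = ((LieAlgebra.ad ℝ L V) ∘ₗ (LieAlgebra.ad ℝ L W)) (f k) := by
      intro k
      simp only [LinearMap.comp_apply, LieAlgebra.ad_apply]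
      rw [← lie_skew W (f k), ← lie_skew V]
      simp
    calc killingForm ℝ L (∑ k, ⁅e k, ⁅f k, W⁆⁆) V
        = ∑ k, killingForm ℝ L (⁅e k, ⁅f k, W⁆⁆) V := by
          rw [map_sum]; simp [LinearMap.sum_apply]
      _ = ∑ k, killingForm ℝ L (e k)
            (((LieAlgebra.ad ℝ L V) ∘ₗ (LieAlgebra.ad ℝ L W)) (f k)) := by
          refine Finset.sum_congr rfl fun k _ => ?_
          rw [h1 k, h2 k]
      _ = -∑ k, f.repr (((LieAlgebra.ad ℝ L V) ∘ₗ (LieAlgebra.ad ℝ L W)) (f k)) k := by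
          rw [← Finset.sum_neg_distrib]
          refine Finset.sum_congr rfl fun k _ => ?_
          rw [aux_repr_f e f hdual]
          ring
      _ = -(LinearMap.trace ℝ L ((LieAlgebra.ad ℝ L V) ∘ₗ (LieAlgebra.ad ℝ L W))) := by
          rw [aux_trace e f hdual]
      _ = -(killingForm ℝ L V W) := by rw [killingForm_apply_apply]
      _ = -(killingForm ℝ L W V) := by rw [LieModule.traceForm_comm]
  have hz : ∑ k, ⁅e k, ⁅f k, W⁆⁆ + W = 0 := by
    refine e.ext_elem fun i => ?_
    rw [aux_repr_e e f hdual, map_add, LinearMap.add_apply, key (f i)]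
    simp
  exact eq_neg_of_add_eq_zero_left hz

lemma aux_swap (F : L →ₗ[ℝ] L →ₗ[ℝ] L) (Z : L) :
    ∑ k, F ⁅Z, e k⁆ (f k) = -∑ k, F (e k) ⁅Z, f k⁆ := by
  have hc : ∀ k, (⁅Z, e k⁆ : L) = ∑ j, (killingForm ℝ L (e k) ⁅Z, f j⁆) • e j := by
    intro k
    conv_lhs => rw [← e.sum_repr ⁅Z, e k⁆]
    refine Finset.sum_congr rfl fun j _ => ?_
    rw [aux_repr_e e f hdual, LieModule.traceForm_apply_lie_apply' ℝ L L Z (e k) (f j), neg_neg]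
  have hd : ∀ j, (⁅Z, f j⁆ : L) = ∑ k, (-(killingForm ℝ L (e k) ⁅Z, f j⁆)) • f k := by
    intro j
    conv_lhs => rw [← f.sum_repr ⁅Z, f j⁆]
    exact Finset.sum_congr rfl fun k _ => by rw [aux_repr_f e f hdual]
  calc ∑ k, F ⁅Z, e k⁆ (f k)
      = ∑ k, ∑ j, (killingForm ℝ L (e k) ⁅Z, f j⁆) • F (e j) (f k) := by
        refine Finset.sum_congr rfl fun k _ => ?_
        rw [hc k]
        simp [LinearMap.sum_apply]
    _ = ∑ j, ∑ k, (killingForm ℝ L (e k) ⁅Z, f j⁆) • F (e j) (f k) := Finset.sum_comm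
    _ = -∑ j, F (e j) ⁅Z, f j⁆ := by
        rw [← Finset.sum_neg_distrib]
        refine Finset.sum_congr rfl fun j _ => ?_
        conv_rhs => rw [hd j]
        simp [Finset.sum_neg_distrib]

end Aux

/-- Proposition 2.3, pointwise algebraic form: for a finite-dimensional
semisimple real Lie algebra with dual bases for `⟨·,·⟩ = -B`, a skew-symmetric adjoint
2-cocycle `T'`, and `A X = Σ_k ⁅e k, T' X (f k)⁆`, the modified derivative vanishes:
`T'(X,Y) - ⁅A X, Y⁆ - ⁅X, A Y⁆ + A ⁅X,Y⁆ = 0`. -/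
theorem statement7 (L : Type*) [LieRing L] [LieAlgebra ℝ L]
    [FiniteDimensional ℝ L] [LieAlgebra.IsSemisimple ℝ L]
    (ι : Type*) [Fintype ι] [DecidableEq ι] (e f : Module.Basis ι ℝ L)
    (hdual : ∀ i j : ι, -(killingForm ℝ L (e i) (f j)) = if i = j then 1 else 0)
    (T' : L →ₗ[ℝ] L →ₗ[ℝ] L)
    (hskew : ∀ X Y : L, T' X Y = - T' Y X)
    (hcocycle : ∀ X Y Z : L,
      ⁅T' X Y, Z⁆ + ⁅T' Y Z, X⁆ + ⁅T' Z X, Y⁆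
        + T' ⁅X, Y⁆ Z + T' ⁅Y, Z⁆ X + T' ⁅Z, X⁆ Y = 0)
    (A : L → L)
    (hA : ∀ X : L, A X = ∑ k, ⁅e k, T' X (f k)⁆) :
    ∀ X Y : L, T' X Y - ⁅A X, Y⁆ - ⁅X, A Y⁆ + A ⁅X, Y⁆ = 0 := by
  intro X Y
  -- bilinear maps for the swap lemma
  let F1 : L →ₗ[ℝ] L →ₗ[ℝ] L := LinearMap.mk₂ ℝ (fun u v => ⁅u, T' Y v⁆)
    (fun m₁ m₂ n => by simp [add_lie]) (fun c m n => by simp [smul_lie])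
    (fun m n₁ n₂ => by simp [lie_add]) (fun c m n => by simp [lie_smul])
  let F2 : L →ₗ[ℝ] L →ₗ[ℝ] L := LinearMap.mk₂ ℝ (fun u v => ⁅T' X v, u⁆)
    (fun m₁ m₂ n => by simp [lie_add]) (fun c m n => by simp [lie_smul])
    (fun m n₁ n₂ => by simp [add_lie]) (fun c m n => by simp [smul_lie])
  have hswap1 : ∑ k, ⁅⁅X, e k⁆, T' Y (f k)⁆ = -∑ k, ⁅e k, T' Y ⁅X, f k⁆⁆ := by
    simpa [F1] using aux_swap e f hdual F1 X
  have hswap2 : ∑ k, ⁅T' X (f k), ⁅Y, e k⁆⁆ = -∑ k, ⁅T' X ⁅Y, f k⁆, e k⁆ := by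
    simpa [F2] using aux_swap e f hdual F2 Y
  -- rearranged cocycle identity
  have hco : ∀ k, T' ⁅X, Y⁆ (f k)
      = -⁅T' X Y, f k⁆ - ⁅T' Y (f k), X⁆ - ⁅T' (f k) X, Y⁆
        - T' ⁅Y, f k⁆ X - T' ⁅f k, X⁆ Y := by
    intro k
    have h := hcocycle X Y (f k)
    rw [← sub_eq_zero, ← h]
    abel
  have s3 : ∀ k, T' ⁅f k, X⁆ Y = T' Y ⁅X, f k⁆ := by
    intro k
    have hfx : (⁅f k, X⁆ : L) = -⁅X, f k⁆ := (lie_skew (f k) X).symm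
    rw [hfx, map_neg, LinearMap.neg_apply, hskew ⁅X, f k⁆ Y, neg_neg]
  have expand : ∀ k, ⁅e k, T' ⁅X, Y⁆ (f k)⁆
      = ⁅e k, ⁅f k, T' X Y⁆⁆
        + (⁅⁅e k, X⁆, T' Y (f k)⁆ + ⁅X, ⁅e k, T' Y (f k)⁆⁆)
        + (⁅⁅e k, T' X (f k)⁆, Y⁆ + ⁅T' X (f k), ⁅e k, Y⁆⁆)
        + ⁅e k, T' X ⁅Y, f k⁆⁆ - ⁅e k, T' Y ⁅X, f k⁆⁆ := by
    intro k
    have l1 : (⁅T' X Y, f k⁆ : L) = -⁅f k, T' X Y⁆ := (lie_skew _ _).symm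
    have l2 : (⁅T' Y (f k), X⁆ : L) = -⁅X, T' Y (f k)⁆ := (lie_skew _ _).symm
    rw [hco k, l1, l2, hskew (f k) X, hskew ⁅Y, f k⁆ X, s3 k]
    simp only [lie_add, lie_sub, lie_neg, neg_lie, neg_neg, sub_neg_eq_add]
    rw [leibniz_lie (e k) X (T' Y (f k)), leibniz_lie (e k) (T' X (f k)) Y]
  have sum_split : ∑ k, ⁅e k, T' ⁅X, Y⁆ (f k)⁆
      = (∑ k, ⁅e k, ⁅f k, T' X Y⁆⁆)
        + ((∑ k, ⁅⁅e k, X⁆, T' Y (f k)⁆) + ∑ k, ⁅X, ⁅e k, T' Y (f k)⁆⁆)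
        + ((∑ k, ⁅⁅e k, T' X (f k)⁆, Y⁆) + ∑ k, ⁅T' X (f k), ⁅e k, Y⁆⁆)
        + ∑ k, ⁅e k, T' X ⁅Y, f k⁆⁆ - ∑ k, ⁅e k, T' Y ⁅X, f k⁆⁆ := by
    rw [Finset.sum_congr rfl fun k _ => expand k]
    simp [Finset.sum_add_distrib, Finset.sum_sub_distrib]
  have c1 : ∑ k, ⁅e k, ⁅f k, T' X Y⁆⁆ = -(T' X Y) := aux_casimir e f hdual _
  have c2 : ∑ k, ⁅⁅e k, X⁆, T' Y (f k)⁆ = ∑ k, ⁅e k, T' Y ⁅X, f k⁆⁆ := by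
    have h : ∑ k, ⁅⁅e k, X⁆, T' Y (f k)⁆ = -∑ k, ⁅⁅X, e k⁆, T' Y (f k)⁆ := by
      rw [← Finset.sum_neg_distrib]
      refine Finset.sum_congr rfl fun k _ => ?_
      rw [← neg_lie, lie_skew]
    rw [h, hswap1, neg_neg]
  have c3 : ∑ k, ⁅T' X (f k), ⁅e k, Y⁆⁆ = -∑ k, ⁅e k, T' X ⁅Y, f k⁆⁆ := by
    have h : ∑ k, ⁅T' X (f k), ⁅e k, Y⁆⁆ = -∑ k, ⁅T' X (f k), ⁅Y, e k⁆⁆ := by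
      rw [← Finset.sum_neg_distrib]
      refine Finset.sum_congr rfl fun k _ => ?_
      rw [← lie_neg, lie_skew]
    rw [h, hswap2, neg_neg]
    rw [← Finset.sum_neg_distrib]
    refine Finset.sum_congr rfl fun k _ => ?_
    exact (lie_skew _ _).symm
  rw [hA X, hA Y, hA ⁅X, Y⁆, aux_sum_lie, aux_lie_sum, sum_split, c1, c2, c3]
  abel
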